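/- arXiv:1812.00731 — 2 statements merged into one kernel-verified Lean document; each statement's English description precedes it below -/
import Mathlib

section
/- On the sphere S³ = {u ∈ ℙ²ℂ : q(u) = 0}, where q(u) = |u₀|² − |u₁|² − |u₂|², the visual distance d(u,v) = sqrt(|⟨u,v⟩|/(‖u‖‖v‖)) satisfies d(u,v)² ≤ d_E(u,v) and d_E(u,v) ≤ C·d(u,v) for some absolute constant C, where d_E(u,v) = ‖u∧v‖/(‖u‖‖v‖) and ⟨u,v⟩ = u₀\overline{v₀} − u₁\overline{v₁} − u₂\overline{v₂}. -/
open scoped ComplexConjugate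

/-- Standard Hermitian inner product on ℂ³. -/
noncomputable def cdot (u v : Fin 3 → ℂ) : ℂ := ∑ i, u i * conj (v i)

/-- Hermitian norm on ℂ³. -/
noncomputable def hnorm (u : Fin 3 → ℂ) : ℝ := Real.sqrt (cdot u u).re

/-- Squared norm of `u ∧ v` in Λ²ℂ³. -/
noncomputable def wedgeSq (u v : Fin 3 → ℂ) : ℝ :=
  (cdot u u * cdot v v - cdot u v * cdot v u).re

/-- `d_E(u,v) = ‖u ∧ v‖/(‖u‖‖v‖)`. -/
noncomputable def dE (u v : Fin 3 → ℂ) : ℝ :=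
  Real.sqrt (wedgeSq u v) / (hnorm u * hnorm v)

/-- The signature (1,2) Hermitian form `⟨u,v⟩ = u₀ conj v₀ − u₁ conj v₁ − u₂ conj v₂`. -/
noncomputable def hform (u v : Fin 3 → ℂ) : ℂ :=
  u 0 * conj (v 0) - u 1 * conj (v 1) - u 2 * conj (v 2)

/-- The visual distance `d(u,v) = sqrt(|⟨u,v⟩|/(‖u‖‖v‖))`. -/
noncomputable def vd (u v : Fin 3 → ℂ) : ℝ :=
  Real.sqrt (‖hform u v‖ / (hnorm u * hnorm v))

private lemma null_facts (u : Fin 3 → ℂ) (hu : u ≠ 0) (h : hform u u = 0) :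
    u 0 ≠ 0 ∧ Complex.normSq (u 1) + Complex.normSq (u 2) = Complex.normSq (u 0) := by
  have h1 : (Complex.normSq (u 0) : ℂ) - Complex.normSq (u 1) - Complex.normSq (u 2) = 0 := by
    simpa [hform, Complex.mul_conj] using h
  have h2 : Complex.normSq (u 1) + Complex.normSq (u 2) = Complex.normSq (u 0) := by
    have := congrArg Complex.re h1
    simp at this
    linarith
  refine ⟨fun h0 => hu ?_, h2⟩
  rw [h0] at h2
  simp at h2
  have e1 : Complex.normSq (u 1) = 0 := by
    nlinarith [Complex.normSq_nonneg (u 1), Complex.normSq_nonneg (u 2)]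
  have e2 : Complex.normSq (u 2) = 0 := by
    nlinarith [Complex.normSq_nonneg (u 1), Complex.normSq_nonneg (u 2)]
  funext i
  fin_cases i
  · exact h0
  · exact Complex.normSq_eq_zero.mp e1
  · exact Complex.normSq_eq_zero.mp e2

private lemma cdot_self_re (u : Fin 3 → ℂ) :
    (cdot u u).re = Complex.normSq (u 0) + Complex.normSq (u 1) + Complex.normSq (u 2) := by
  simp [cdot, Fin.sum_univ_three, Complex.mul_conj]

private lemma par_law (A B : ℂ) : ‖A - B‖ ^ 2 + ‖A + B‖ ^ 2
    = 2 * ‖A‖ ^ 2 + 2 * ‖B‖ ^ 2 := by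
  simp only [Complex.sq_norm, Complex.normSq_sub, Complex.normSq_add]
  ring

private lemma real_key (a b m p : ℝ) (hb : b ≤ a) (hb0 : 0 ≤ b) (hm : 0 ≤ m)
    (hp : 0 ≤ p) (hpar : m ^ 2 + p ^ 2 = 2 * a ^ 2 + 2 * b ^ 2) (htri : 2 * a ≤ p + m) :
    m ^ 2 ≤ 4 * a ^ 2 - p ^ 2 ∧ 4 * a ^ 2 - p ^ 2 ≤ 4 * a * m := by
  have ha0 : 0 ≤ a := le_trans hb0 hb
  have hp2a : p ≤ 2 * a := by nlinarith
  constructor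
  · nlinarith
  · nlinarith [mul_le_mul_of_nonneg_right (show 2 * a - p ≤ m by linarith)
      (show (0:ℝ) ≤ 2 * a + p by linarith), mul_le_mul_of_nonneg_left hp2a hm]

/-- On the sphere `S³ = {q = 0} ⊂ ℙ²ℂ`: `d(u,v)² ≤ d_E(u,v)` and
`d_E(u,v) ≤ C·d(u,v)` for an absolute constant `C`. -/
theorem visual_vs_euclidean :
    ∃ C : ℝ, 0 < C ∧ ∀ u v : Fin 3 → ℂ, u ≠ 0 → v ≠ 0 →
      hform u u = 0 → hform v v = 0 →
      vd u v ^ 2 ≤ dE u v ∧ dE u v ≤ C * vd u v := by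
  refine ⟨Real.sqrt 2, Real.sqrt_pos.mpr (by norm_num), fun u v hu hv huu hvv => ?_⟩
  obtain ⟨hu0, hu2⟩ := null_facts u hu huu
  obtain ⟨hv0, hv2⟩ := null_facts v hv hvv
  set A : ℂ := u 0 * conj (v 0) with hA
  set B : ℂ := u 1 * conj (v 1) + u 2 * conj (v 2) with hB
  set a : ℝ := ‖A‖ with ha
  set b : ℝ := ‖B‖ with hbdef
  set m : ℝ := ‖A - B‖ with hmdef
  set p : ℝ := ‖A + B‖ with hpdef
  have ha_pos : 0 < a := by
    rw [ha, hA]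
    simp only [norm_mul, Complex.norm_conj]
    exact mul_pos (norm_pos_iff.mpr hu0) (norm_pos_iff.mpr hv0)
  -- Cauchy–Schwarz: b ≤ a
  have hb_le : b ≤ a := by
    have habs : a = ‖u 0‖ * ‖v 0‖ := by
      rw [ha, hA, norm_mul, Complex.norm_conj]
    have htr : b ≤ ‖u 1‖ * ‖v 1‖
        + ‖u 2‖ * ‖v 2‖ := by
      rw [hbdef, hB]
      calc ‖u 1 * conj (v 1) + u 2 * conj (v 2)‖
          ≤ ‖u 1 * conj (v 1)‖ + ‖u 2 * conj (v 2)‖ :=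
            norm_add_le _ _
        _ = _ := by simp [norm_mul, Complex.norm_conj]
    have hcs : (‖u 1‖ * ‖v 1‖
        + ‖u 2‖ * ‖v 2‖) ^ 2
        ≤ (‖u 1‖ ^ 2 + ‖u 2‖ ^ 2)
          * (‖v 1‖ ^ 2 + ‖v 2‖ ^ 2) := by
      nlinarith [sq_nonneg (‖u 1‖ * ‖v 2‖
        - ‖u 2‖ * ‖v 1‖),
        norm_nonneg (u 1), norm_nonneg (u 2),
        norm_nonneg (v 1), norm_nonneg (v 2)]
    have hnu : ‖u 1‖ ^ 2 + ‖u 2‖ ^ 2 = ‖u 0‖ ^ 2 := by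
      simpa [Complex.sq_norm] using hu2
    have hnv : ‖v 1‖ ^ 2 + ‖v 2‖ ^ 2 = ‖v 0‖ ^ 2 := by
      simpa [Complex.sq_norm] using hv2
    rw [hnu, hnv] at hcs
    have : b ^ 2 ≤ a ^ 2 := by
      rw [habs]
      calc b ^ 2 ≤ (‖u 1‖ * ‖v 1‖
          + ‖u 2‖ * ‖v 2‖) ^ 2 := by
            apply pow_le_pow_left₀ (norm_nonneg _) htr
        _ ≤ _ := by nlinarith [hcs]
    nlinarith [norm_nonneg B]
  have hpar : m ^ 2 + p ^ 2 = 2 * a ^ 2 + 2 * b ^ 2 := par_law A B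
  have htri : 2 * a ≤ p + m := by
    have h1 : ‖(A + B) + (A - B)‖ ≤ p + m := norm_add_le _ _
    have h2 : (A + B) + (A - B) = (2 : ℂ) * A := by ring
    rw [h2, norm_mul, Complex.norm_two] at h1
    exact h1
  obtain ⟨hkey1, hkey2⟩ := real_key a b m p hb_le (norm_nonneg _)
    (norm_nonneg _) (norm_nonneg _) hpar htri
  -- identify the quantities
  have hre_u : (cdot u u).re = 2 * Complex.normSq (u 0) := by
    rw [cdot_self_re]; linarith
  have hre_v : (cdot v v).re = 2 * Complex.normSq (v 0) := by
    rw [cdot_self_re]; linarith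
  have hA2 : a ^ 2 = Complex.normSq (u 0) * Complex.normSq (v 0) := by
    rw [ha, hA, norm_mul, Complex.norm_conj, mul_pow, Complex.sq_norm, Complex.sq_norm]
  have hnormu : hnorm u = Real.sqrt 2 * ‖u 0‖ := by
    rw [hnorm, hre_u, ← Complex.sq_norm, Real.sqrt_mul (by norm_num),
      Real.sqrt_sq (norm_nonneg _)]
  have hnormv : hnorm v = Real.sqrt 2 * ‖v 0‖ := by
    rw [hnorm, hre_v, ← Complex.sq_norm, Real.sqrt_mul (by norm_num),
      Real.sqrt_sq (norm_nonneg _)]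
  have hprod : hnorm u * hnorm v = 2 * a := by
    rw [hnormu, hnormv, ha, hA, norm_mul, Complex.norm_conj]
    rw [show Real.sqrt 2 * ‖u 0‖ * (Real.sqrt 2 * ‖v 0‖)
        = (Real.sqrt 2 * Real.sqrt 2) * (‖u 0‖ * ‖v 0‖) by ring]
    rw [Real.mul_self_sqrt (by norm_num)]
  have hformeq : hform u v = A - B := by
    rw [hform, hA, hB]; ring
  have hcdot : cdot u v = A + B := by
    rw [cdot, Fin.sum_univ_three, hA, hB]; ring
  have hcdot' : cdot v u = conj (cdot u v) := by
    simp [cdot, map_sum, map_mul, mul_comm]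
  have hwedge : wedgeSq u v = 4 * a ^ 2 - p ^ 2 := by
    rw [wedgeSq, hcdot', hcdot]
    have h1 : ((A + B) * conj (A + B)) = (Complex.normSq (A + B) : ℂ) := Complex.mul_conj _
    rw [h1]
    have h2 : (cdot u u * cdot v v).re = 4 * a ^ 2 := by
      have hu' : cdot u u = ((cdot u u).re : ℂ) := by
        rw [cdot, Fin.sum_univ_three]
        simp [Complex.mul_conj]
      have hv' : cdot v v = ((cdot v v).re : ℂ) := by
        rw [cdot, Fin.sum_univ_three]
        simp [Complex.mul_conj]
      rw [hu', hv', ← Complex.ofReal_mul, Complex.ofReal_re, hre_u, hre_v, hA2]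
      ring
    rw [Complex.sub_re, h2, Complex.ofReal_re, hpdef, Complex.sq_norm, Complex.sq_norm]
  have hvdsq : vd u v ^ 2 = m / (2 * a) := by
    rw [vd, hformeq, hprod, ← hmdef, Real.sq_sqrt]
    positivity
  have hdE : dE u v = Real.sqrt (4 * a ^ 2 - p ^ 2) / (2 * a) := by
    rw [dE, hwedge, hprod]
  have h2a : (0:ℝ) < 2 * a := by linarith
  have hX0 : (0:ℝ) ≤ 4 * a ^ 2 - p ^ 2 := le_trans (sq_nonneg m) hkey1
  have hvd : vd u v = Real.sqrt (m / (2 * a)) := by rw [vd, hformeq, hprod, ← hmdef]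
  have hm0 : 0 ≤ m := norm_nonneg _
  clear_value A B a b m p
  constructor
  · rw [hvdsq, hdE]
    gcongr
    calc m = Real.sqrt (m ^ 2) := (Real.sqrt_sq hm0).symm
      _ ≤ Real.sqrt (4 * a ^ 2 - p ^ 2) := Real.sqrt_le_sqrt hkey1
  · rw [hdE, hvd]
    rw [← Real.sqrt_mul (by norm_num : (0:ℝ) ≤ 2)]
    have hL : Real.sqrt (4 * a ^ 2 - p ^ 2) / (2 * a)
        = Real.sqrt ((4 * a ^ 2 - p ^ 2) / (2 * a) ^ 2) := by
      rw [Real.sqrt_div hX0, Real.sqrt_sq h2a.le]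
    rw [hL]
    apply Real.sqrt_le_sqrt
    have e1 : 2 * (m / (2 * a)) = m / a := by field_simp
    rw [e1, div_le_div_iff₀ (by positivity) ha_pos]
    exact le_trans (mul_le_mul_of_nonneg_right hkey2 ha_pos.le) (le_of_eq (by ring))
end

section
/- For any w ∈ ℂ³ with ⟨w,w⟩ < 0 and any x ∈ ℙ²ℂ, the Euclidean distance from x to the projective line w^⊥ = {u ∈ ℙ²ℂ : ⟨u,w⟩ = 0} equals |⟨x,w⟩|/(‖x‖·‖w‖), where distances in ℙ²ℂ are measured by d_E(u,v) = ‖u∧v‖/(‖u‖‖v‖) and the norms come from the standard Hermitian product on ℂ³ and Λ²ℂ³. -/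
open scoped ComplexConjugate

abbrev E3 := EuclideanSpace ℂ (Fin 3)
def toE (u : Fin 3 → ℂ) : E3 := WithLp.toLp 2 u
local notation "⟪" x ", " y "⟫" => @inner ℂ E3 _ x y

def Jmap (w : Fin 3 → ℂ) : Fin 3 → ℂ := ![w 0, -w 1, -w 2]

lemma cdot_eq (u v : Fin 3 → ℂ) : cdot u v = ⟪toE v, toE u⟫ := by
  rw [PiLp.inner_apply]; simp [cdot, toE, mul_comm]

lemma hnorm_eq (u : Fin 3 → ℂ) : hnorm u = ‖toE u‖ := by
  rw [norm_eq_sqrt_re_inner (𝕜 := ℂ), RCLike.re_to_complex, hnorm, cdot_eq]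

lemma hform_eq (u w : Fin 3 → ℂ) : hform u w = ⟪toE (Jmap w), toE u⟫ := by
  rw [← cdot_eq]
  simp [hform, cdot, Fin.sum_univ_three, Jmap]
  ring

lemma hnorm_J (w : Fin 3 → ℂ) : hnorm w = ‖toE (Jmap w)‖ := by
  rw [← hnorm_eq]
  simp [hnorm, cdot, Fin.sum_univ_three, Jmap]

lemma wedgeSq_eq (x u : Fin 3 → ℂ) :
    wedgeSq x u = ‖toE x‖^2 * ‖toE u‖^2 - ‖⟪toE u, toE x⟫‖^2 := by
  have h1 : cdot x x = (‖toE x‖:ℂ)^2 := by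
    rw [cdot_eq]; exact_mod_cast inner_self_eq_norm_sq_to_K (toE x)
  have h2 : cdot u u = (‖toE u‖:ℂ)^2 := by
    rw [cdot_eq]; exact_mod_cast inner_self_eq_norm_sq_to_K (toE u)
  have h3 : cdot x u * cdot u x = (‖⟪toE u, toE x⟫‖:ℂ)^2 := by
    rw [cdot_eq, cdot_eq, ← inner_conj_symm (toE x) (toE u)]
    exact RCLike.mul_conj (K := ℂ) _
  rw [wedgeSq, h1, h2, h3]
  norm_cast

lemma key_ineq (x v u : E3) (hv : v ≠ 0) (h : ⟪v, u⟫ = 0) :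
    ‖⟪v, x⟫‖^2 * ‖u‖^2 ≤ (‖x‖^2 * ‖u‖^2 - ‖⟪u, x⟫‖^2) * ‖v‖^2 := by
  have hv2 : (0:ℝ) < ‖v‖ := norm_pos_iff.mpr hv
  set c : ℂ := ⟪v, x⟫ / ((‖v‖:ℂ)^2) with hc
  set p : E3 := x - c • v with hp
  have hvv : ⟪v, v⟫ = (‖v‖:ℂ)^2 := by exact_mod_cast inner_self_eq_norm_sq_to_K v
  have hv0 : ((‖v‖:ℂ)^2) ≠ 0 := pow_ne_zero 2 (Complex.ofReal_ne_zero.mpr hv2.ne')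
  have hvp : ⟪v, p⟫ = 0 := by
    rw [hp, inner_sub_right, inner_smul_right, hvv, hc, div_mul_cancel₀ _ hv0, sub_self]
  have hpv : ⟪p, v⟫ = 0 := by rw [← inner_conj_symm, hvp, map_zero]
  have huv : ⟪u, v⟫ = 0 := by rw [← inner_conj_symm, h, map_zero]
  have hux : ⟪u, x⟫ = ⟪u, p⟫ := by
    rw [hp, inner_sub_right, inner_smul_right, huv, mul_zero, sub_zero]
  have hxdec : x = p + c • v := by rw [hp]; abel
  have pyth : ‖x‖^2 = ‖p‖^2 + ‖c‖^2 * ‖v‖^2 := by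
    rw [hxdec, @norm_add_sq ℂ, inner_smul_right, hpv, mul_zero, norm_smul]
    simp; ring
  have hcs : ‖⟪u, p⟫‖ ≤ ‖u‖ * ‖p‖ := norm_inner_le_norm u p
  have hvx : ‖⟪v, x⟫‖ = ‖c‖ * ‖v‖^2 := by
    have : c * (‖v‖:ℂ)^2 = ⟪v, x⟫ := by
      rw [hc, div_mul_cancel₀ _ hv0]
    rw [← this, norm_mul]
    norm_num
  rw [hux, hvx, pyth]
  have h1 : (0:ℝ) ≤ ‖⟪u, p⟫‖ := norm_nonneg _
  have h2 : (0:ℝ) ≤ ‖u‖ := norm_nonneg _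
  have h3 : (0:ℝ) ≤ ‖p‖ := norm_nonneg _
  have ht2 : ‖⟪u, p⟫‖^2 ≤ ‖u‖^2 * ‖p‖^2 := by nlinarith
  nlinarith [mul_nonneg (sub_nonneg.mpr ht2) (sq_nonneg ‖v‖)]

lemma exists_orth (v : E3) (hv : v ≠ 0) : ∃ u : E3, u ≠ 0 ∧ ⟪v, u⟫ = 0 := by
  have hne : ((ℂ ∙ v)ᗮ : Submodule ℂ E3) ≠ ⊥ := by
    intro hbot
    rw [Submodule.orthogonal_eq_bot_iff] at hbot
    have h1 : Module.finrank ℂ (ℂ ∙ v) = 1 := finrank_span_singleton hv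
    rw [hbot, finrank_top] at h1
    have h3 : Module.finrank ℂ E3 = 3 := finrank_euclideanSpace_fin
    omega
  obtain ⟨u, hmem, hu⟩ := Submodule.ne_bot_iff _ |>.1 hne
  exact ⟨u, hu, (Submodule.mem_orthogonal _ _).1 hmem v (Submodule.mem_span_singleton_self v)⟩


/-- For `w` with `⟨w,w⟩ < 0` and `x ∈ ℙ²ℂ`, the Euclidean distance from `x` to the
projective line `w^⊥ = {u : ⟨u,w⟩ = 0}` equals `|⟨x,w⟩|/(‖x‖‖w‖)`. -/
theorem dist_to_polar_line (w : Fin 3 → ℂ) (hw : (hform w w).re < 0)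
    (x : Fin 3 → ℂ) (hx : x ≠ 0) :
    sInf {r : ℝ | ∃ u : Fin 3 → ℂ, u ≠ 0 ∧ hform u w = 0 ∧ r = dE x u}
      = ‖hform x w‖ / (hnorm x * hnorm w) := by
  classical
  set v : E3 := toE (Jmap w) with hvdef
  have hw0 : w ≠ 0 := by
    intro h; rw [h] at hw; simp [hform] at hw
  have hv : v ≠ 0 := by
    intro h
    apply hw0
    have h0 := congrArg (fun z : E3 => z.ofLp 0) h
    have h1 := congrArg (fun z : E3 => z.ofLp 1) h
    have h2 := congrArg (fun z : E3 => z.ofLp 2) h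
    simp [hvdef, toE, Jmap] at h0 h1 h2
    funext i
    fin_cases i <;> simp [h0, h1, h2]
  have hX : toE x ≠ 0 := fun h => hx (by simpa [toE] using congrArg WithLp.ofLp h)
  have hxn : (0:ℝ) < ‖toE x‖ := norm_pos_iff.mpr hX
  have hvn : (0:ℝ) < ‖v‖ := norm_pos_iff.mpr hv
  set R : ℝ := ‖⟪v, toE x⟫‖ / (‖toE x‖ * ‖v‖) with hR
  have hRHS : ‖hform x w‖ / (hnorm x * hnorm w) = R := by
    rw [hform_eq, hnorm_eq, hnorm_J, hR, hvdef]
  rw [hRHS]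
  have hlow : ∀ r ∈ {r : ℝ | ∃ u : Fin 3 → ℂ, u ≠ 0 ∧ hform u w = 0 ∧ r = dE x u}, R ≤ r := by
    rintro r ⟨u, hu, hperp, rfl⟩
    have hU : toE u ≠ 0 := fun h => hu (by simpa [toE] using congrArg WithLp.ofLp h)
    have hun : (0:ℝ) < ‖toE u‖ := norm_pos_iff.mpr hU
    rw [hform_eq, ← hvdef] at hperp
    have hkey := key_ineq (toE x) v (toE u) hv hperp
    rw [dE, wedgeSq_eq, hnorm_eq, hnorm_eq]
    set W := ‖toE x‖^2 * ‖toE u‖^2 - ‖⟪toE u, toE x⟫‖^2 with hW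
    have hcs := norm_inner_le_norm (𝕜 := ℂ) (toE u) (toE x)
    have hW0 : (0:ℝ) ≤ W := by nlinarith [norm_nonneg (⟪toE u, toE x⟫)]
    have hkey' : (‖⟪v, toE x⟫‖ * ‖toE u‖)^2 ≤ W * ‖v‖^2 := by nlinarith
    have hs : ‖⟪v, toE x⟫‖ * ‖toE u‖ ≤ Real.sqrt W * ‖v‖ := by
      have h5 := Real.sqrt_le_sqrt hkey'
      rwa [Real.sqrt_sq (by positivity), Real.sqrt_mul hW0, Real.sqrt_sq hvn.le] at h5
    rw [hR, div_le_div_iff₀ (by positivity) (by positivity)]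
    calc ‖⟪v, toE x⟫‖ * (‖toE x‖ * ‖toE u‖)
        = (‖⟪v, toE x⟫‖ * ‖toE u‖) * ‖toE x‖ := by ring
      _ ≤ (Real.sqrt W * ‖v‖) * ‖toE x‖ := mul_le_mul_of_nonneg_right hs hxn.le
      _ = Real.sqrt W * (‖toE x‖ * ‖v‖) := by ring
  have hmem : R ∈ {r : ℝ | ∃ u : Fin 3 → ℂ, u ≠ 0 ∧ hform u w = 0 ∧ r = dE x u} := by
    have hvv : ⟪v, v⟫ = (‖v‖:ℂ)^2 := by exact_mod_cast inner_self_eq_norm_sq_to_K v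
    have hv0 : ((‖v‖:ℂ)^2) ≠ 0 := pow_ne_zero 2 (Complex.ofReal_ne_zero.mpr hvn.ne')
    set c : ℂ := ⟪v, toE x⟫ / ((‖v‖:ℂ)^2) with hc
    set p : E3 := toE x - c • v with hp
    have hvp : ⟪v, p⟫ = 0 := by
      rw [hp, inner_sub_right, inner_smul_right, hvv, hc, div_mul_cancel₀ _ hv0, sub_self]
    have hpv : ⟪p, v⟫ = 0 := by rw [← inner_conj_symm, hvp, map_zero]
    have hxdec : toE x = p + c • v := by rw [hp]; abel
    have pyth : ‖toE x‖^2 = ‖p‖^2 + ‖c‖^2 * ‖v‖^2 := by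
      rw [hxdec, norm_add_sq (𝕜 := ℂ) (x := p) (y := c • v), inner_smul_right, hpv, mul_zero,
        norm_smul]
      simp; ring
    have hvx : ‖⟪v, toE x⟫‖ = ‖c‖ * ‖v‖^2 := by
      have hcv : c * (‖v‖:ℂ)^2 = ⟪v, toE x⟫ := by
        rw [hc, div_mul_cancel₀ _ hv0]
      rw [← hcv, norm_mul]; norm_num
    by_cases hp0 : p = 0
    · -- x is proportional to v
      have hc0 : c ≠ 0 := by
        intro h
        apply hX
        rw [hxdec, hp0, h, zero_smul, add_zero]
      obtain ⟨u, hu0, huperp⟩ := exists_orth v hv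
      have huv : ⟪u, v⟫ = 0 := by rw [← inner_conj_symm, huperp, map_zero]
      refine ⟨u, fun h => hu0 (by simpa using congrArg (WithLp.toLp 2) h), ?_, ?_⟩
      · rw [hform_eq, ← hvdef]; exact huperp
      · have hun : (0:ℝ) < ‖u‖ := norm_pos_iff.mpr hu0
        have hux : ⟪(u : E3), toE x⟫ = 0 := by
          rw [hxdec, hp0, zero_add, inner_smul_right, huv, mul_zero]
        rw [dE, wedgeSq_eq, hnorm_eq, hnorm_eq]
        have htu : toE u = u := rfl
        rw [htu, hux]
        have : ‖toE x‖^2 * ‖u‖^2 - ‖(0:ℂ)‖^2 = (‖toE x‖ * ‖u‖)^2 := by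
          simp; ring
        have hcn : (0:ℝ) < ‖c‖ := norm_pos_iff.mpr hc0
        have hnx : ‖toE x‖ = ‖c‖ * ‖v‖ := by
          rw [hxdec, hp0, zero_add, norm_smul]
        rw [this, Real.sqrt_sq (by positivity), hR, hvx, hnx,
          show ‖c‖ * ‖v‖ ^ 2 / (‖c‖ * ‖v‖ * ‖v‖) = 1 from by
            rw [show ‖c‖ * ‖v‖ ^ 2 = ‖c‖ * ‖v‖ * ‖v‖ from by ring]
            exact div_self (by positivity),
          show ‖c‖ * ‖v‖ * ‖u‖ / (‖c‖ * ‖v‖ * ‖u‖) = 1 from div_self (by positivity)]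
    · -- take u = p
      have hpn : (0:ℝ) < ‖p‖ := norm_pos_iff.mpr hp0
      refine ⟨p, fun h => hp0 (by simpa using congrArg (WithLp.toLp 2) h), ?_, ?_⟩
      · rw [hform_eq, ← hvdef]; exact hvp
      · have hpx : ⟪(p : E3), toE x⟫ = (‖p‖:ℂ)^2 := by
          rw [hxdec, inner_add_right, inner_smul_right, hpv, mul_zero, add_zero]
          exact_mod_cast inner_self_eq_norm_sq_to_K p
        rw [dE, wedgeSq_eq, hnorm_eq, hnorm_eq]
        have htp : toE p = p := rfl
        rw [htp, hpx]
        have hnp : ‖((‖p‖:ℂ)^2)‖ = ‖p‖^2 := by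
          rw [norm_pow, Complex.norm_real, Real.norm_of_nonneg (norm_nonneg _)]
        rw [hnp]
        have hWe : ‖toE x‖^2 * ‖p‖^2 - (‖p‖^2)^2 = (‖p‖ * (‖c‖ * ‖v‖))^2 := by
          rw [pyth]; ring
        rw [hWe, Real.sqrt_sq (by positivity), hR, hvx]
        field_simp
  exact le_antisymm
    (csInf_le ⟨R, fun r hr => hlow r hr⟩ hmem)
    (le_csInf ⟨R, hmem⟩ hlow)
end
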